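/- Let B ≥ 2 be an integer base and k ≥ 1. There exists a digit-block triple (a, b, c) with property P*_k if and only if B is composite. -/

import Mathlib

private lemma modeq_eq_of_le' {x y q : ℕ} (hx : 1 ≤ x) (hxq : x ≤ q) (hy : 1 ≤ y)
    (hyq : y ≤ q) (h : Nat.ModEq q x y) : x = y := by
  refine h.eq_of_abs_lt ?_
  rw [abs_lt]
  omega

/-- The `P*_k` problem admits solutions iff the base `B` is composite. -/
theorem stmt_2 (B k : ℕ) (hB : 2 ≤ B) (hk : 1 ≤ k) :
    (∃ a b c : ℕ,
      B ^ (k - 1) ≤ a ∧ a < B ^ k ∧ b < B ∧ c < B ^ k ∧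
      (a * B + b) * c = a * (b * B ^ k + c) ∧
      (¬(a = 0 ∧ b = 0) ∧ ¬(a = 0 ∧ c = 0) ∧ ¬(b = 0 ∧ c = 0)) ∧
      ¬(a = b * ((B ^ k - 1) / (B - 1)) ∧ c = b * ((B ^ k - 1) / (B - 1)))) ↔
    ¬ Nat.Prime B := by
  constructor
  · rintro ⟨a, b, c, ha1, ha2, hbB, hcB, heq, ⟨hab, hac, hbc⟩, htriv⟩ hp
    obtain ⟨q, rfl⟩ : ∃ q, B = q + 1 := ⟨B - 1, by omega⟩
    have hq1 : 1 ≤ q := by omega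
    have hPpos : 0 < (q + 1) ^ k := by positivity
    -- rearranged equation
    have heqZ : (c : ℤ) * (a * q + b) = a * b * (q + 1) ^ k := by
      have h0 : ((a * (q + 1) + b) * c : ℤ) = a * (b * (q + 1) ^ k + c) := by
        exact_mod_cast heq
      linear_combination h0
    have heq' : c * (a * q + b) = a * b * (q + 1) ^ k := by exact_mod_cast heqZ
    -- positivity of a, b, c
    have ha0 : 0 < a := by
      rcases Nat.eq_zero_or_pos a with h | h
      · subst h
        simp only [Nat.zero_mul, Nat.zero_add, Nat.mul_zero, zero_mul] at heq'
        rcases Nat.mul_eq_zero.mp heq' with h | h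
        · exact absurd ⟨rfl, h⟩ hac
        · exact absurd ⟨rfl, h⟩ hab
      · exact h
    have hb0 : 0 < b := by
      rcases Nat.eq_zero_or_pos b with h | h
      · subst h
        exfalso
        have hcz : c * (a * q) = 0 := by simpa using heq'
        rcases Nat.mul_eq_zero.mp hcz with h | h
        · exact hbc ⟨rfl, h⟩
        · have : 0 < a * q := by positivity
          omega
      · exact h
    have hc0 : 0 < c := by
      rcases Nat.eq_zero_or_pos c with h | h
      · subst h
        simp only [Nat.zero_mul] at heq'
        have : 0 < a * b * (q + 1) ^ k := by positivity
        omega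
      · exact h
    -- gcd decomposition
    set g := Nat.gcd a b with hgdef
    have hg0 : 0 < g := Nat.gcd_pos_of_pos_left b ha0
    set α := a / g with hadef
    set β := b / g with hbdef
    have hga : g * α = a := Nat.mul_div_cancel' (Nat.gcd_dvd_left a b)
    have hgb : g * β = b := Nat.mul_div_cancel' (Nat.gcd_dvd_right a b)
    have hco : Nat.Coprime α β := Nat.coprime_div_gcd_div_gcd hg0
    have hα0 : 0 < α := Nat.pos_of_ne_zero (fun h => by rw [h, Nat.mul_zero] at hga; omega)
    have hβ0 : 0 < β := Nat.pos_of_ne_zero (fun h => by rw [h, Nat.mul_zero] at hgb; omega)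
    -- cancel g in the equation
    set W := α * q + β with hWdef
    have hW0 : 0 < W := by positivity
    have h4 : c * W = α * b * (q + 1) ^ k := by
      have h3 : g * (c * W) = g * (α * b * (q + 1) ^ k) := by
        have hgaZ : (g : ℤ) * α = a := by exact_mod_cast hga
        have hgbZ : (g : ℤ) * β = b := by exact_mod_cast hgb
        have : (g : ℤ) * (c * W) = g * (α * b * (q + 1) ^ k) := by
          rw [hWdef]
          push_cast
          linear_combination heqZ + ((c : ℤ) * q - (b : ℤ) * (q + 1) ^ k) * hgaZ + (c : ℤ) * hgbZ
        exact_mod_cast this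
      exact Nat.eq_of_mul_eq_mul_left hg0 h3
    -- p-adic part
    set m := W.factorization (q + 1) with hmdef
    set w := W / (q + 1) ^ m with hwdef
    have hsplit : (q + 1) ^ m * w = W := Nat.ordProj_mul_ordCompl_eq_self W (q + 1)
    have hnd : ¬ (q + 1) ∣ w := Nat.not_dvd_ordCompl hp hW0.ne'
    have hw0 : 0 < w := by
      rcases Nat.eq_zero_or_pos w with h | h
      · rw [h, Nat.mul_zero] at hsplit; omega
      · exact h
    have hcop : Nat.Coprime w ((q + 1) ^ k) :=
      Nat.Coprime.pow_right k ((hp.coprime_iff_not_dvd.mpr hnd).symm)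
    -- w ∣ b
    have hwW : w ∣ W := ⟨(q + 1) ^ m, by rw [← hsplit]; ring⟩
    have hwαb : w ∣ α * b := by
      have h5 : w ∣ α * b * (q + 1) ^ k := by
        rw [← h4]
        exact hwW.mul_left c
      exact hcop.dvd_of_dvd_mul_right h5
    have hcwα : Nat.Coprime w α := by
      have h6 : Nat.Coprime W α := by
        have : Nat.gcd (β + α * q) α = Nat.gcd β α := by
          rw [Nat.mul_comm]
          exact Nat.gcd_add_mul_right_left α β q
        have h7 : Nat.gcd W α = Nat.gcd β α := by rw [hWdef, Nat.add_comm]; exact this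
        unfold Nat.Coprime
        rw [h7]
        exact hco.symm
      exact Nat.Coprime.coprime_dvd_left hwW h6
    have hwb : w ∣ b := by
      have : w ∣ b * α := by rwa [Nat.mul_comm] at hwαb
      exact hcwα.dvd_of_dvd_mul_right this
    have hw_le : w ≤ q := le_trans (Nat.le_of_dvd hb0 hwb) (by omega)
    have hβ_le : β ≤ q := le_trans (Nat.le_of_dvd hb0 ⟨g, by rw [← hgb]; ring⟩) (by omega)
    -- congruence mod q : w ≡ β
    have hmodB : (q + 1) ≡ 1 [MOD q] := by
      show (q + 1) % q = 1 % q
      exact Nat.add_mod_left q 1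
    have hmodBm : (q + 1) ^ m ≡ 1 [MOD q] := by
      simpa using hmodB.pow m
    have hmodW : W ≡ β [MOD q] := by
      rw [hWdef]
      calc α * q + β ≡ 0 + β [MOD q] := Nat.ModEq.add_right β (Nat.modEq_zero_iff_dvd.mpr ⟨α, Nat.mul_comm α q⟩)
        _ = β := by omega
    have hmodw : w ≡ β [MOD q] := by
      have h8 : (q + 1) ^ m * w ≡ 1 * w [MOD q] := hmodBm.mul_right w
      have h9 : w ≡ W [MOD q] := by simpa [hsplit] using h8.symm
      exact h9.trans hmodW
    have hwβ : w = β := modeq_eq_of_le' hw0 hw_le hβ0 hβ_le hmodw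
    -- key equation : α * q + β = (q+1)^m * β
    have hkey : α * q + β = (q + 1) ^ m * β := by rw [← hWdef, ← hsplit, hwβ]
    have hm1 : 1 ≤ m := by
      by_contra h
      have hm0 : m = 0 := by omega
      rw [hm0, pow_zero, one_mul] at hkey
      have h' : 1 * 1 ≤ α * q := Nat.mul_le_mul hα0 hq1
      linarith
    -- r with q * r = (q+1)^m - 1
    have hdq : q ∣ (q + 1) ^ m - 1 := by
      have := (Nat.modEq_iff_dvd' (Nat.one_le_pow m (q + 1) (by omega))).mp hmodBm.symm
      exact this
    set r := ((q + 1) ^ m - 1) / q with hrdef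
    have hqr : q * r = (q + 1) ^ m - 1 := Nat.mul_div_cancel' hdq
    have hpm : (q + 1) ^ m = q * r + 1 := by
      have h1 : 1 ≤ (q + 1) ^ m := Nat.one_le_pow m (q + 1) (by omega)
      omega
    have hαrβ : α = r * β := by
      have h10 : α * q = (r * β) * q := by
        rw [hpm] at hkey
        ring_nf at hkey ⊢
        linarith
      exact Nat.eq_of_mul_eq_mul_right hq1 h10
    have hβ1 : β = 1 := by
      have hdvd : β ∣ α := ⟨r, by rw [hαrβ]; ring⟩
      have : β ∣ 1 := hco ▸ Nat.dvd_gcd hdvd dvd_rfl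
      exact Nat.dvd_one.mp this
    rw [hβ1, Nat.mul_one] at hαrβ hkey hgb
    -- so α = r, b = g, and α * q + 1 = (q+1)^m
    have hαr : α = r := hαrβ
    -- bounds ⟹ m = k
    have hab' : a = b * r := by rw [← hga, ← hgb, hαr]
    have hg_le : g ≤ q := by omega
    have hr1 : 1 ≤ r := by
      rcases Nat.eq_zero_or_pos r with h | h
      · rw [h, Nat.mul_zero] at hpm
        have h2 : (q + 1) ^ 1 ≤ (q + 1) ^ m := Nat.pow_le_pow_right (by omega) hm1
        rw [pow_one] at h2
        omega
      · exact h
    have hmk1 : m ≤ k := by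
      -- (q+1)^(m-1) ≤ r ≤ a < (q+1)^k
      have hX : (q + 1) ^ (m - 1) ≤ r := by
        by_contra h
        push_neg at h
        have h11 : r + 1 ≤ (q + 1) ^ (m - 1) := h
        have h12 : q * (r + 1) ≤ q * (q + 1) ^ (m - 1) := Nat.mul_le_mul_left q h11
        have h12' : q * r + q ≤ q * (q + 1) ^ (m - 1) := by
          calc q * r + q = q * (r + 1) := by ring
            _ ≤ _ := h12
        have h13 : (q + 1) ^ m = q * (q + 1) ^ (m - 1) + (q + 1) ^ (m - 1) := by
          conv_lhs => rw [show m = (m - 1) + 1 by omega]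
          ring
        have h14 : 1 ≤ (q + 1) ^ (m - 1) := Nat.one_le_pow _ _ (by omega)
        linarith
      have h14 : r ≤ a := by
        calc r ≤ g * r := Nat.le_mul_of_pos_left r hg0
          _ = a := by rw [← hga, hαr]
      have h15 : (q + 1) ^ (m - 1) < (q + 1) ^ k := lt_of_le_of_lt (le_trans hX h14) ha2
      have := (Nat.pow_lt_pow_iff_right (show 1 < q + 1 by omega)).mp h15
      omega
    have hmk2 : k ≤ m := by
      have h16 : a ≤ q * r := by
        calc a = g * r := by rw [← hga, hαr]
          _ ≤ q * r := Nat.mul_le_mul_right r hg_le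
      have h17 : (q + 1) ^ (k - 1) < (q + 1) ^ m := by
        calc (q + 1) ^ (k - 1) ≤ a := ha1
          _ ≤ q * r := h16
          _ < (q + 1) ^ m := by omega
      have := (Nat.pow_lt_pow_iff_right (show 1 < q + 1 by omega)).mp h17
      omega
    have hmk : m = k := le_antisymm hmk1 hmk2
    -- conclude c = a and the trivial form
    have hca : c = a := by
      have hWP : W = (q + 1) ^ k := by
        rw [← hsplit, hwβ, hβ1, hmk, Nat.mul_one]
      have h18 : c * ((q + 1) ^ k) = α * b * (q + 1) ^ k := by
        rw [hWP] at h4; exact h4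
      have h19 : c = α * b := Nat.eq_of_mul_eq_mul_right hPpos h18
      rw [h19, ← hga, ← hgb, hαr]
      ring
    -- ((q+1)^k - 1) / (q+1-1) = r
    have hrval : ((q + 1) ^ k - 1) / (q + 1 - 1) = r := by
      have : q + 1 - 1 = q := by omega
      rw [this, ← hmk, ← hqr]
      exact Nat.mul_div_cancel_left r hq1
    exact htriv ⟨by rw [hrval]; exact hab', by rw [hrval, hca]; exact hab'⟩
  · intro hp
    obtain ⟨e, he, he2, heB⟩ := Nat.exists_dvd_of_not_prime2 hB hp
    obtain ⟨f, hf⟩ := he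
    have hf2 : 2 ≤ f := by
      rcases Nat.lt_or_ge f 2 with h | h
      · interval_cases f <;> omega
      · exact h
    obtain ⟨n, rfl⟩ : ∃ n, k = n + 1 := ⟨k - 1, by omega⟩
    set M := e ^ n * f ^ (n + 1) with hMdef
    have hX1 : 0 < e ^ n * f ^ n := by positivity
    have hM2X : 2 * (e ^ n * f ^ n) ≤ M := by
      rw [hMdef, pow_succ]
      nlinarith
    have hM2 : 2 ≤ M := by omega
    have hBk : B ^ (n + 1) = e * M := by
      rw [hf, hMdef, mul_pow, pow_succ]
      ring
    have hBn : B ^ n = e ^ n * f ^ n := by rw [hf, mul_pow]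
    refine ⟨M - 1, B - 1, e * (M - 1), ?_, ?_, by omega, ?_, ?_, ⟨?_, ?_, ?_⟩, ?_⟩
    · -- B ^ (n+1-1) ≤ M - 1
      have : n + 1 - 1 = n := by omega
      rw [this, hBn]
      omega
    · -- M - 1 < B ^ (n+1)
      rw [hBk]
      have : M ≤ e * M := Nat.le_mul_of_pos_left M (by omega)
      omega
    · -- e * (M - 1) < B ^ (n+1)
      rw [hBk]
      have h5 : e * (M - 1 + 1) ≤ e * M := Nat.mul_le_mul_left e (by omega)
      have h6 : e * (M - 1 + 1) = e * (M - 1) + e := by ring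
      omega
    · -- equation
      obtain ⟨A, hA⟩ : ∃ A, M = A + 1 := ⟨M - 1, by omega⟩
      obtain ⟨t, ht⟩ : ∃ t, B = t + 1 := ⟨B - 1, by omega⟩
      rw [hBk, hA, ht]
      simp only [Nat.add_sub_cancel]
      ring
    · -- ¬(a = 0 ∧ b = 0)
      rintro ⟨h1, _⟩; omega
    · rintro ⟨h1, _⟩; omega
    · rintro ⟨_, h2⟩
      have : 0 < e * (M - 1) := Nat.mul_pos (by omega) (by omega)
      omega
    · rintro ⟨h1, h2⟩
      have h3 : M - 1 = e * (M - 1) := h1.trans h2.symm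
      have h4 : 2 * (M - 1) ≤ e * (M - 1) := Nat.mul_le_mul_right _ he2
      omega
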